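/- If a finite simple graph G is self-complementary (i.e. G is isomorphic to its complement Ḡ), then ρ_T(G) = ρ_T̂(G). -/
import Mathlib


/-- A min-plus `k`-tropical dot product representation of `G` with threshold `t`:
distinct vertices `x, y` are adjacent iff `min_{1 ≤ i ≤ k} (f(x)_i + f(y)_i) ≥ t`
(equivalently, every coordinate sum is at least `t`). -/
def MinPlusRep {V : Type*} (G : SimpleGraph V) (k : ℕ) (f : V → Fin k → ℝ) (t : ℝ) : Prop :=
  0 < t ∧ ∀ x y : V, x ≠ y → (G.Adj x y ↔ ∀ i : Fin k, t ≤ f x i + f y i)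

/-- The min-plus tropical dot product dimension `ρ_T(G)`. -/
noncomputable def rhoT {V : Type*} (G : SimpleGraph V) : ℕ :=
  sInf {k : ℕ | 0 < k ∧ ∃ (f : V → Fin k → ℝ) (t : ℝ), MinPlusRep G k f t}

/-- A max-plus `k`-tropical dot product representation of `G` with threshold `t`:
distinct vertices `x, y` are adjacent iff `max_{1 ≤ i ≤ k} (f(x)_i + f(y)_i) ≥ t`
(equivalently, some coordinate sum is at least `t`). -/
def MaxPlusRep {V : Type*} (G : SimpleGraph V) (k : ℕ) (f : V → Fin k → ℝ) (t : ℝ) : Prop :=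
  0 < t ∧ ∀ x y : V, x ≠ y → (G.Adj x y ↔ ∃ i : Fin k, t ≤ f x i + f y i)

/-- The max-plus tropical dot product dimension `ρ_T̂(G)`. -/
noncomputable def rhoTHat {V : Type*} (G : SimpleGraph V) : ℕ :=
  sInf {k : ℕ | 0 < k ∧ ∃ (f : V → Fin k → ℝ) (t : ℝ), MaxPlusRep G k f t}

lemma exists_sep {V : Type*} [Fintype V] {k : ℕ} (f : V → Fin k → ℝ) (t : ℝ) :
    ∃ s : ℝ, s < t ∧ ∀ x y : V, ∀ i : Fin k,
      (f x i + f y i < t ↔ f x i + f y i ≤ s) := by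
  classical
  set T : Finset ℝ :=
    (Finset.univ.image (fun p : V × V × Fin k => f p.1 p.2.2 + f p.2.1 p.2.2)).filter
      (· < t) with hT
  by_cases hne : T.Nonempty
  · have hmem := T.max'_mem hne
    rw [Finset.mem_filter] at hmem
    refine ⟨T.max' hne, hmem.2, fun x y i => ?_⟩
    constructor
    · intro h
      apply T.le_max'
      rw [Finset.mem_filter]
      exact ⟨Finset.mem_image.2 ⟨(x, y, i), Finset.mem_univ _, rfl⟩, h⟩
    · intro h; linarith [hmem.2]
  · refine ⟨t - 1, by linarith, fun x y i => ?_⟩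
    constructor
    · intro h
      exact absurd ⟨f x i + f y i, by
        rw [Finset.mem_filter]
        exact ⟨Finset.mem_image.2 ⟨(x, y, i), Finset.mem_univ _, rfl⟩, h⟩⟩ hne
    · intro h; linarith

lemma min_to_max {V : Type*} [Fintype V] {G : SimpleGraph V} {k : ℕ} {f : V → Fin k → ℝ}
    {t : ℝ} (h : MinPlusRep G k f t) :
    ∃ (g : V → Fin k → ℝ) (t' : ℝ), MaxPlusRep Gᶜ k g t' := by
  obtain ⟨ht, hadj⟩ := h
  obtain ⟨s, hst, hs⟩ := exists_sep f t
  refine ⟨fun x i => (|s| / 2 + 1) - f x i, 2 * (|s| / 2 + 1) - s, ?_, fun x y hxy => ?_⟩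
  · have := le_abs_self s; linarith
  · rw [SimpleGraph.compl_adj]
    constructor
    · rintro ⟨-, hn⟩
      rw [hadj x y hxy] at hn
      push_neg at hn
      obtain ⟨i, hi⟩ := hn
      refine ⟨i, ?_⟩
      have := (hs x y i).1 hi
      linarith
    · rintro ⟨i, hi⟩
      refine ⟨hxy, ?_⟩
      rw [hadj x y hxy]
      push_neg
      exact ⟨i, (hs x y i).2 (by linarith)⟩

lemma max_to_min {V : Type*} [Fintype V] {G : SimpleGraph V} {k : ℕ} {f : V → Fin k → ℝ}
    {t : ℝ} (h : MaxPlusRep G k f t) :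
    ∃ (g : V → Fin k → ℝ) (t' : ℝ), MinPlusRep Gᶜ k g t' := by
  obtain ⟨ht, hadj⟩ := h
  obtain ⟨s, hst, hs⟩ := exists_sep f t
  refine ⟨fun x i => (|s| / 2 + 1) - f x i, 2 * (|s| / 2 + 1) - s, ?_, fun x y hxy => ?_⟩
  · have := le_abs_self s; linarith
  · rw [SimpleGraph.compl_adj]
    constructor
    · rintro ⟨-, hn⟩ i
      rw [hadj x y hxy] at hn
      push_neg at hn
      have := (hs x y i).1 (hn i)
      linarith
    · intro hi
      refine ⟨hxy, ?_⟩
      rw [hadj x y hxy]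
      push_neg
      intro i
      have := hi i
      exact (hs x y i).2 (by linarith)

lemma maxRep_map {V W : Type*} {G : SimpleGraph V} {H : SimpleGraph W} (e : G ≃g H)
    {k : ℕ} {f : W → Fin k → ℝ} {t : ℝ} (h : MaxPlusRep H k f t) :
    MaxPlusRep G k (fun v => f (e v)) t := by
  refine ⟨h.1, fun x y hxy => ?_⟩
  rw [← e.map_adj_iff]
  exact h.2 (e x) (e y) (fun he => hxy (e.injective he))

lemma minRep_map {V W : Type*} {G : SimpleGraph V} {H : SimpleGraph W} (e : G ≃g H)
    {k : ℕ} {f : W → Fin k → ℝ} {t : ℝ} (h : MinPlusRep H k f t) :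
    MinPlusRep G k (fun v => f (e v)) t := by
  refine ⟨h.1, fun x y hxy => ?_⟩
  rw [← e.map_adj_iff]
  exact h.2 (e x) (e y) (fun he => hxy (e.injective he))

/-- If `G` is self-complementary then `ρ_T(G) = ρ_T̂(G)`. -/
theorem stmt_10 {V : Type*} [Fintype V] (G : SimpleGraph V) (h : Nonempty (G ≃g Gᶜ)) :
    rhoT G = rhoTHat G := by
  obtain ⟨e⟩ := h
  unfold rhoT rhoTHat
  congr 1
  ext k
  simp only [Set.mem_setOf_eq]
  constructor
  · rintro ⟨hk, f, t, hrep⟩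
    obtain ⟨g, t', hg⟩ := min_to_max hrep
    exact ⟨hk, _, t', maxRep_map e hg⟩
  · rintro ⟨hk, f, t, hrep⟩
    obtain ⟨g, t', hg⟩ := max_to_min hrep
    exact ⟨hk, _, t', minRep_map e hg⟩
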